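/- Let n ≥ 1 and let b₁, …, bₙ ⊆ [k] be a separable collection of two-element subsets of [k]. Then the number of subsets A ⊆ [k] that simultaneously separate every bᵢ is at least 2^{k−n} (equivalently, a uniformly random subset of [k] separates the collection with probability at least 2^{−n}). -/

import Mathlib

open Finset

/-- `A` separates `B` if both `A ∩ B` and `Aᶜ ∩ B` are nonempty. -/
def Separates {X : Type*} [Fintype X] [DecidableEq X] (A B : Finset X) : Prop :=
  (A ∩ B).Nonempty ∧ (Aᶜ ∩ B).Nonempty

instance {X : Type*} [Fintype X] [DecidableEq X] (A B : Finset X) :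
    Decidable (Separates A B) := by
  unfold Separates; infer_instance

/-- The indicator-vector equivalence between subsets and `ZMod 2` vectors. -/
def finsetEquivVec (k : ℕ) : Finset (Fin k) ≃ (Fin k → ZMod 2) where
  toFun A x := if x ∈ A then 1 else 0
  invFun v := Finset.univ.filter (fun x => v x = 1)
  left_inv A := by
    ext x
    by_cases hx : x ∈ A <;> simp [hx]
  right_inv v := by
    funext x
    by_cases hx : v x = 1
    · simp [hx]
    · have h2 : ∀ z : ZMod 2, z ≠ 1 → z = 0 := by decide
      simp [hx, h2 _ hx]

lemma sep_iff {k : ℕ} (A B : Finset (Fin k)) (hB : B.card = 2) :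
    Separates A B ↔ ∑ x ∈ B, (if x ∈ A then (1 : ZMod 2) else 0) = 1 := by
  obtain ⟨x, y, hxy, rfl⟩ := Finset.card_eq_two.mp hB
  rw [Finset.sum_pair hxy]
  have h1 : (A ∩ {x, y}).Nonempty ↔ (x ∈ A ∨ y ∈ A) := by
    constructor
    · rintro ⟨u, hu⟩
      simp only [Finset.mem_inter, Finset.mem_insert, Finset.mem_singleton] at hu
      rcases hu.2 with rfl | rfl
      · exact Or.inl hu.1
      · exact Or.inr hu.1
    · rintro (h | h)
      · exact ⟨x, by simp [h]⟩
      · exact ⟨y, by simp [h]⟩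
  have h2 : (Aᶜ ∩ {x, y}).Nonempty ↔ (x ∉ A ∨ y ∉ A) := by
    constructor
    · rintro ⟨u, hu⟩
      simp only [Finset.mem_inter, Finset.mem_insert, Finset.mem_singleton,
        Finset.mem_compl] at hu
      rcases hu.2 with rfl | rfl
      · exact Or.inl hu.1
      · exact Or.inr hu.1
    · rintro (h | h)
      · exact ⟨x, by simp [h]⟩
      · exact ⟨y, by simp [h]⟩
  unfold Separates
  rw [h1, h2]
  by_cases hx : x ∈ A <;> by_cases hy : y ∈ A <;> simp [hx, hy] <;> decide

theorem stmt_8 (n k : ℕ) (hn : 1 ≤ n) (b : Fin n → Finset (Fin k))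
    (hb : ∀ i, (b i).card = 2)
    (hsep : ∃ A : Finset (Fin k), ∀ i, Separates A (b i)) :
    2 ^ (k - n) ≤
      (Finset.univ.filter (fun A : Finset (Fin k) => ∀ i, Separates A (b i))).card := by
  classical
  -- the linear map
  set f : (Fin k → ZMod 2) →+ (Fin n → ZMod 2) :=
    { toFun := fun v i => ∑ x ∈ b i, v x
      map_zero' := by funext i; simp
      map_add' := by intro v w; funext i; simp [Finset.sum_add_distrib] } with hf
  set t : Fin n → ZMod 2 := fun _ => 1 with ht
  have key : ∀ A : Finset (Fin k),
      (∀ i, Separates A (b i)) ↔ f (finsetEquivVec k A) = t := by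
    intro A
    constructor
    · intro h
      funext i
      have := (sep_iff A (b i) (hb i)).mp (h i)
      simpa [hf, ht, finsetEquivVec] using this
    · intro h i
      refine (sep_iff A (b i) (hb i)).mpr ?_
      have := congrFun h i
      simpa [hf, ht, finsetEquivVec] using this
  -- cardinality of the filter is the fiber cardinality
  have hcard : (Finset.univ.filter (fun A : Finset (Fin k) => ∀ i, Separates A (b i))).card
      = Nat.card {v : Fin k → ZMod 2 // f v = t} := by
    rw [Nat.card_eq_fintype_card, ← Fintype.card_subtype]
    exact Fintype.card_congr ((finsetEquivVec k).subtypeEquiv key)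
  rw [hcard]
  obtain ⟨A₀, hA₀⟩ := hsep
  set v₀ := finsetEquivVec k A₀ with hv₀
  have hv₀t : f v₀ = t := (key A₀).mp hA₀
  -- fiber ≃ kernel
  have e2 : {v : Fin k → ZMod 2 // f v = t} ≃ f.ker :=
    { toFun := fun v => ⟨v.1 - v₀, by
        simp [AddMonoidHom.mem_ker, map_sub, v.2, hv₀t]⟩
      invFun := fun w => ⟨w.1 + v₀, by
        have hw : f w.1 = 0 := AddMonoidHom.mem_ker.mp w.2
        simp [map_add, hw, hv₀t]⟩
      left_inv := fun v => by simp
      right_inv := fun w => by simp }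
  rw [Nat.card_congr e2]
  -- kernel size: |G| = |G/ker| * |ker|, |G/ker| = |range| ≤ 2^n
  have hGcard : Nat.card (Fin k → ZMod 2) = 2 ^ k := by
    simp [Nat.card_eq_fintype_card]
  have hquot : Nat.card ((Fin k → ZMod 2) ⧸ f.ker) = Nat.card f.range :=
    Nat.card_congr (QuotientAddGroup.quotientKerEquivRange f).toEquiv
  have hmul : Nat.card ((Fin k → ZMod 2) ⧸ f.ker) * Nat.card f.ker = 2 ^ k := by
    rw [← hGcard]
    exact (AddSubgroup.card_eq_card_quotient_mul_card_addSubgroup f.ker).symm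
  have hrange : Nat.card f.range ≤ 2 ^ n := by
    calc Nat.card f.range ≤ Nat.card (Fin n → ZMod 2) :=
          Nat.card_le_card_of_injective _ Subtype.val_injective
      _ = 2 ^ n := by simp [Nat.card_eq_fintype_card]
  rw [hquot] at hmul
  have hkerpos : 0 < Nat.card f.ker := Nat.card_pos
  rcases le_or_gt n k with hnk | hnk
  · -- 2^k = range * ker ≤ 2^n * ker, so 2^(k-n) ≤ ker
    have : 2 ^ k ≤ 2 ^ n * Nat.card f.ker := by
      rw [← hmul]; exact Nat.mul_le_mul_right _ hrange
    have h2 : 2 ^ n * 2 ^ (k - n) ≤ 2 ^ n * Nat.card f.ker := by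
      rwa [← pow_add, Nat.add_sub_cancel' hnk]
    exact Nat.le_of_mul_le_mul_left h2 (Nat.pow_pos (n := n) (by norm_num))
  · have : k - n = 0 := Nat.sub_eq_zero_of_le hnk.le
    rw [this, pow_zero]
    exact hkerpos
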